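/- Let m ≥ 1, let σ : ℝ → ℝ be any function, and suppose there exists c ∈ ℝ with σ(c) ≠ 0. Then there exist matrices W₀, W₁ ∈ ℝ^{(m+1)×m} and W₂ ∈ ℝ^{(m+1)×m} such that for every x ∈ ℝ^m, the gated linear unit map ψ(x) := ( (x,1)·W₀ ⊙ σ((x,1)·W₁), 1 )·W₂ equals x, where σ is applied entrywise, (x,1) ∈ ℝ^{m+1} denotes x with a 1 appended, and ⊙ denotes the entrywise product of vectors. -/
import Mathlib


open scoped BigOperators

lemma vecMul_single_col {n : ℕ} (v : Fin n → ℝ) (a : Fin n) (t : ℝ) :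
    Matrix.vecMul v (fun i _ : Fin n => if i = a then t else 0) = fun _ => v a * t := by
  funext j
  simp [Matrix.vecMul, dotProduct, mul_ite, Finset.sum_ite_eq']

/-- GLU MLPs with any activation `σ` that is not identically zero can implement the
identity map: there exist weight matrices `W₀, W₁ ∈ ℝ^{(m+1)×m}` and `W₂ ∈ ℝ^{(m+1)×m}`
such that for every `x ∈ ℝ^m`, `((x,1)·W₀ ⊙ σ((x,1)·W₁), 1)·W₂ = x`, where `σ` is
applied entrywise, `(x,1)` denotes `x` with a `1` appended, and `⊙` is the entrywise
product. -/
theorem glu_mlp_identity {m : ℕ} (hm : 1 ≤ m) (σ : ℝ → ℝ) (hσ : ∃ c : ℝ, σ c ≠ 0) :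
    ∃ (W₀ W₁ : Matrix (Fin (m + 1)) (Fin m) ℝ) (W₂ : Matrix (Fin (m + 1)) (Fin m) ℝ),
      ∀ x : Fin m → ℝ,
        Matrix.vecMul
          (Fin.snoc
            (fun j => Matrix.vecMul (Fin.snoc x 1) W₀ j *
              σ (Matrix.vecMul (Fin.snoc x 1) W₁ j))
            1)
          W₂ = x := by
  obtain ⟨c, hc⟩ := hσ
  refine ⟨fun i j => if i = j.castSucc then 1 else 0,
    fun i _ => if i = Fin.last m then c else 0,
    fun i j => if i = j.castSucc then (σ c)⁻¹ else 0, fun x => ?_⟩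
  funext j
  simp only [Matrix.vecMul, dotProduct, mul_ite, mul_zero, Finset.sum_ite_eq',
    Finset.mem_univ, if_true, Fin.snoc_castSucc, Fin.snoc_last]
  field_simp
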